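/- Let A be an abelian group and suppose that every uniformly fully inert subgroup of A ⊕ A is commensurable with some fully invariant subgroup of A ⊕ A. Then every uniformly fully inert subgroup of A is commensurable with some fully invariant subgroup of A. -/

import Mathlib

/-- A subgroup is fully invariant if it is mapped into itself by every endomorphism. -/
def FullyInvariant {G : Type*} [AddCommGroup G] (F : AddSubgroup G) : Prop :=
  ∀ φ : G →+ G, F.map φ ≤ F

/-- A subgroup `S` is uniformly fully inert if there is a positive integer `m` such that
for every endomorphism `φ` the quotient `(φ(S) + S)/S` has at most `m` elements. -/
def UniformlyFullyInert {G : Type*} [AddCommGroup G] (S : AddSubgroup G) : Prop :=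
  ∃ m : ℕ, 0 < m ∧ ∀ φ : G →+ G,
    Finite (↥(S.map φ ⊔ S) ⧸ S.addSubgroupOf (S.map φ ⊔ S)) ∧
    Nat.card (↥(S.map φ ⊔ S) ⧸ S.addSubgroupOf (S.map φ ⊔ S)) ≤ m

/-- Two subgroups `B`, `C` are commensurable if `(B + C)/B` and `(B + C)/C` are finite. -/
def AddCommensurable {G : Type*} [AddCommGroup G] (B C : AddSubgroup G) : Prop :=
  Finite (↥(B ⊔ C) ⧸ B.addSubgroupOf (B ⊔ C)) ∧
  Finite (↥(B ⊔ C) ⧸ C.addSubgroupOf (B ⊔ C))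

section Aux

open AddSubgroup

variable {G : Type*} [AddCommGroup G]

lemma card_quot_eq_relindex (B C : AddSubgroup G) :
    Nat.card (↥(B ⊔ C) ⧸ B.addSubgroupOf (B ⊔ C)) = B.relIndex (B ⊔ C) := rfl

lemma finite_quot_iff (B C : AddSubgroup G) :
    Finite (↥(B ⊔ C) ⧸ B.addSubgroupOf (B ⊔ C)) ↔ B.relIndex (B ⊔ C) ≠ 0 := by
  rw [← card_quot_eq_relindex]
  constructor
  · intro h
    exact Nat.card_ne_zero.2 ⟨inferInstance, h⟩
  · intro h
    exact Nat.finite_of_card_ne_zero h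

/-- Uniform full inertia in terms of `relindex`. -/
lemma uniformlyFullyInert_iff (S : AddSubgroup G) :
    UniformlyFullyInert S ↔ ∃ m : ℕ, 0 < m ∧ ∀ φ : G →+ G,
      S.relIndex (S.map φ ⊔ S) ≠ 0 ∧ S.relIndex (S.map φ ⊔ S) ≤ m := by
  unfold UniformlyFullyInert
  refine exists_congr fun m => and_congr_right fun _ => forall_congr' fun φ => ?_
  rw [show S.map φ ⊔ S = S ⊔ S.map φ from sup_comm _ _, finite_quot_iff,
    card_quot_eq_relindex]

/-- Commensurability in terms of `relindex`. -/
lemma addCommensurable_iff (B C : AddSubgroup G) :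
    AddCommensurable B C ↔ B.relIndex (B ⊔ C) ≠ 0 ∧ C.relIndex (B ⊔ C) ≠ 0 := by
  unfold AddCommensurable
  rw [finite_quot_iff]
  constructor
  · rintro ⟨h1, h2⟩
    refine ⟨h1, ?_⟩
    rw [show B ⊔ C = C ⊔ B from sup_comm _ _] at h2
    rw [show B ⊔ C = C ⊔ B from sup_comm _ _]
    exact (finite_quot_iff C B).1 h2
  · rintro ⟨h1, h2⟩
    refine ⟨h1, ?_⟩
    rw [show B ⊔ C = C ⊔ B from sup_comm _ _]
    exact (finite_quot_iff C B).2 (by rwa [show C ⊔ B = B ⊔ C from sup_comm _ _])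

variable {B : Type*} [AddCommGroup B]

lemma map_fst_prod (H : AddSubgroup G) (K : AddSubgroup B) :
    (H.prod K).map (AddMonoidHom.fst G B) = H := by
  ext x
  simp only [AddSubgroup.mem_map, AddSubgroup.mem_prod, AddMonoidHom.coe_fst]
  constructor
  · rintro ⟨⟨a, b⟩, ⟨ha, _⟩, rfl⟩
    exact ha
  · intro hx
    exact ⟨(x, 0), ⟨hx, K.zero_mem⟩, rfl⟩

lemma map_snd_prod (H : AddSubgroup G) (K : AddSubgroup B) :
    (H.prod K).map (AddMonoidHom.snd G B) = K := by
  ext x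
  simp only [AddSubgroup.mem_map, AddSubgroup.mem_prod, AddMonoidHom.coe_snd]
  constructor
  · rintro ⟨⟨a, b⟩, ⟨_, hb⟩, rfl⟩
    exact hb
  · intro hx
    exact ⟨(0, x), ⟨H.zero_mem, hx⟩, rfl⟩

lemma prod_inf_prod (H H' : AddSubgroup G) (K K' : AddSubgroup B) :
    (H.prod K) ⊓ (H'.prod K') = (H ⊓ H').prod (K ⊓ K') := by
  ext ⟨a, b⟩
  simp only [AddSubgroup.mem_inf, AddSubgroup.mem_prod]
  tauto

lemma prod_sup_prod (H K : AddSubgroup G) (H' K' : AddSubgroup B) :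
    H.prod H' ⊔ K.prod K' = (H ⊔ K).prod (H' ⊔ K') := by
  apply le_antisymm
  · exact sup_le (AddSubgroup.prod_mono le_sup_left le_sup_left)
      (AddSubgroup.prod_mono le_sup_right le_sup_right)
  · rintro ⟨a, b⟩ ⟨ha, hb⟩
    have hab : ((a, b) : G × B) = (a, 0) + (0, b) := by norm_num
    rw [hab]
    refine AddSubgroup.add_mem _ ?_ ?_
    · rcases AddSubgroup.mem_sup.1 ha with ⟨u, hu, w, hw, rfl⟩
      have h' : ((u + w, (0 : B)) : G × B) = (u, 0) + (w, 0) := by norm_num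
      rw [h']
      exact AddSubgroup.add_mem _
        (AddSubgroup.mem_sup_left ⟨hu, H'.zero_mem⟩)
        (AddSubgroup.mem_sup_right ⟨hw, K'.zero_mem⟩)
    · rcases AddSubgroup.mem_sup.1 hb with ⟨u, hu, w, hw, rfl⟩
      have h' : (((0 : G), u + w) : G × B) = (0, u) + (0, w) := by norm_num
      rw [h']
      exact AddSubgroup.add_mem _
        (AddSubgroup.mem_sup_left ⟨H.zero_mem, hu⟩)
        (AddSubgroup.mem_sup_right ⟨K.zero_mem, hw⟩)

/-- The relative index of a product of subgroups in a product of subgroups. -/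
lemma relindex_prod (H H' : AddSubgroup G) (K K' : AddSubgroup B) :
    (H.prod K).relIndex (H'.prod K') = H.relIndex H' * K.relIndex K' := by
  have key := AddSubgroup.relIndex_inf_mul_relIndex
    (H.prod (⊤ : AddSubgroup B)) ((⊤ : AddSubgroup G).prod K) (H'.prod K')
  have e1 : (H.prod (⊤ : AddSubgroup B)) ⊓ ((⊤ : AddSubgroup G).prod K) = H.prod K := by
    rw [prod_inf_prod]; simp
  have e2 : ((⊤ : AddSubgroup G).prod K) ⊓ (H'.prod K') = H'.prod (K ⊓ K') := by
    rw [prod_inf_prod]; simp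
  rw [e1, e2] at key
  rw [AddSubgroup.prod_top, AddSubgroup.top_prod, AddSubgroup.relIndex_comap,
    AddSubgroup.relIndex_comap, map_fst_prod, map_snd_prod] at key
  rw [← key]

/-- Bounding the relative index of `U` in `U.map φ ⊔ U.map φ' ⊔ U`. -/
lemma relindex_two_sup {U : AddSubgroup G} {m : ℕ}
    (h : ∀ φ : G →+ G, U.relIndex (U.map φ ⊔ U) ≠ 0 ∧ U.relIndex (U.map φ ⊔ U) ≤ m)
    (φ φ' : G →+ G) :
    U.relIndex (U.map φ ⊔ U.map φ' ⊔ U) ≠ 0 ∧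
      U.relIndex (U.map φ ⊔ U.map φ' ⊔ U) ≤ m * m := by
  set X := U.map φ ⊔ U with hX
  set Y := U.map φ' ⊔ U with hY
  have hsup : U.map φ ⊔ U.map φ' ⊔ U = X ⊔ Y := by
    rw [hX, hY]
    apply le_antisymm
    · exact sup_le (sup_le (le_trans le_sup_left le_sup_left)
        (le_trans le_sup_left le_sup_right)) (le_trans le_sup_right le_sup_left)
    · exact sup_le (sup_le (le_sup_left.trans le_sup_left) le_sup_right)
        (sup_le (le_sup_right.trans le_sup_left) le_sup_right)
  have hUX : U ≤ X := le_sup_right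
  have hUY : U ≤ Y := le_sup_right
  have hXXY : X ≤ X ⊔ Y := le_sup_left
  have h1 := h φ
  have h2 := h φ'
  have tower := AddSubgroup.relIndex_mul_relIndex U X (X ⊔ Y) hUX hXXY
  have hXsup : X.relIndex (X ⊔ Y) = X.relIndex Y := AddSubgroup.relIndex_sup_left Y X
  have hdvd : X.relIndex Y ∣ U.relIndex Y := AddSubgroup.relIndex_dvd_of_le_left Y hUX
  have hXYne : X.relIndex Y ≠ 0 := fun hz => h2.1 (Nat.eq_zero_of_zero_dvd (hz ▸ hdvd))
  have hXYle : X.relIndex Y ≤ m := le_trans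
    (Nat.le_of_dvd (Nat.pos_of_ne_zero h2.1) hdvd) h2.2
  rw [hsup, ← tower, hXsup]
  exact ⟨mul_ne_zero h1.1 hXYne, Nat.mul_le_mul h1.2 hXYle⟩

end Aux

/-- If every uniformly fully inert subgroup of `A ⊕ A` is commensurable with a fully
invariant subgroup of `A ⊕ A`, then the same holds in `A`. -/
theorem uniformlyFullyInert_of_square
    (A : Type*) [AddCommGroup A]
    (hsq : ∀ S : AddSubgroup (A × A), UniformlyFullyInert S →
      ∃ F : AddSubgroup (A × A), FullyInvariant F ∧ AddCommensurable S F) :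
    ∀ U : AddSubgroup A, UniformlyFullyInert U →
      ∃ V : AddSubgroup A, FullyInvariant V ∧ AddCommensurable U V := by
  intro U hU
  rw [uniformlyFullyInert_iff] at hU
  obtain ⟨m, hm, hU⟩ := hU
  set S : AddSubgroup (A × A) := U.prod U with hS
  -- S is uniformly fully inert
  have hSufi : UniformlyFullyInert S := by
    rw [uniformlyFullyInert_iff]
    refine ⟨m * m * (m * m), by positivity, fun ψ => ?_⟩
    set φ11 : A →+ A := (AddMonoidHom.fst A A).comp (ψ.comp (AddMonoidHom.inl A A))
    set φ12 : A →+ A := (AddMonoidHom.fst A A).comp (ψ.comp (AddMonoidHom.inr A A))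
    set φ21 : A →+ A := (AddMonoidHom.snd A A).comp (ψ.comp (AddMonoidHom.inl A A))
    set φ22 : A →+ A := (AddMonoidHom.snd A A).comp (ψ.comp (AddMonoidHom.inr A A))
    set T : AddSubgroup (A × A) :=
      (U.map φ11 ⊔ U.map φ12 ⊔ U).prod (U.map φ21 ⊔ U.map φ22 ⊔ U) with hT
    have hST : S.map ψ ⊔ S ≤ T := by
      refine sup_le ?_ ?_
      · rintro x ⟨⟨u, v⟩, ⟨hu, hv⟩, rfl⟩
        have hdecomp : ψ (u, v) = ψ (u, 0) + ψ (0, v) := by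
          rw [← map_add]; norm_num
        have h1 : (ψ (u, v)).1 = φ11 u + φ12 v := by
          rw [hdecomp]; rfl
        have h2 : (ψ (u, v)).2 = φ21 u + φ22 v := by
          rw [hdecomp]; rfl
        constructor
        · rw [h1]
          exact AddSubgroup.add_mem _
            (AddSubgroup.mem_sup_left (AddSubgroup.mem_sup_left
              (AddSubgroup.mem_map_of_mem φ11 hu)))
            (AddSubgroup.mem_sup_left (AddSubgroup.mem_sup_right
              (AddSubgroup.mem_map_of_mem φ12 hv)))
        · rw [h2]
          exact AddSubgroup.add_mem _
            (AddSubgroup.mem_sup_left (AddSubgroup.mem_sup_left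
              (AddSubgroup.mem_map_of_mem φ21 hu)))
            (AddSubgroup.mem_sup_left (AddSubgroup.mem_sup_right
              (AddSubgroup.mem_map_of_mem φ22 hv)))
      · rintro ⟨a, b⟩ ⟨ha, hb⟩
        exact ⟨AddSubgroup.mem_sup_right ha, AddSubgroup.mem_sup_right hb⟩
    have hb1 := relindex_two_sup hU φ11 φ12
    have hb2 := relindex_two_sup hU φ21 φ22
    have hrel : S.relIndex T = U.relIndex (U.map φ11 ⊔ U.map φ12 ⊔ U) *
        U.relIndex (U.map φ21 ⊔ U.map φ22 ⊔ U) := relindex_prod U _ U _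
    have hTne : S.relIndex T ≠ 0 := by
      rw [hrel]; exact mul_ne_zero hb1.1 hb2.1
    have hTle : S.relIndex T ≤ m * m * (m * m) := by
      rw [hrel]; exact Nat.mul_le_mul hb1.2 hb2.2
    constructor
    · intro hz
      exact hTne (AddSubgroup.relIndex_eq_zero_of_le_right hST hz)
    · exact le_trans (AddSubgroup.relIndex_le_of_le_right hST hTne) hTle
  obtain ⟨F, hFinv, hFcomm⟩ := hsq S hSufi
  -- F = W.prod W for a fully invariant W
  set W : AddSubgroup A := F.comap (AddMonoidHom.inl A A) with hW
  have hWinv : FullyInvariant W := by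
    intro φ
    rintro x ⟨a, ha, rfl⟩
    have : ((AddMonoidHom.inl A A).comp (φ.comp (AddMonoidHom.fst A A))) (a, 0) ∈ F :=
      hFinv _ (AddSubgroup.mem_map_of_mem _ ha)
    exact this
  have hFW : F = W.prod W := by
    ext ⟨a, b⟩
    constructor
    · intro hab
      constructor
      · have : ((AddMonoidHom.inl A A).comp (AddMonoidHom.fst A A)) (a, b) ∈ F :=
          hFinv _ (AddSubgroup.mem_map_of_mem _ hab)
        exact this
      · have : ((AddMonoidHom.inl A A).comp (AddMonoidHom.snd A A)) (a, b) ∈ F :=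
          hFinv _ (AddSubgroup.mem_map_of_mem _ hab)
        exact this
    · rintro ⟨ha, hb⟩
      have h0b : ((0 : A), b) ∈ F := by
        have : ((AddMonoidHom.inr A A).comp (AddMonoidHom.fst A A)) (b, 0) ∈ F :=
          hFinv _ (AddSubgroup.mem_map_of_mem _ hb)
        exact this
      have : (a, b) = ((a, 0) : A × A) + (0, b) := by norm_num
      rw [this]
      exact F.add_mem ha h0b
  rw [addCommensurable_iff] at hFcomm
  have hsupWW : S ⊔ W.prod W = (U ⊔ W).prod (U ⊔ W) := by
    rw [hS]
    exact prod_sup_prod U W U W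
  refine ⟨W, hWinv, (addCommensurable_iff U W).2 ⟨?_, ?_⟩⟩
  · have h1 := hFcomm.1
    rw [hFW, hsupWW, hS, relindex_prod] at h1
    exact fun hz => h1 (by simp [hz])
  · have h2 := hFcomm.2
    rw [hFW, hsupWW, relindex_prod] at h2
    exact fun hz => h2 (by simp [hz])
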